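/- Let r(t;θ,r₀) be the solution of the radial collapse ODE. There exist smooth functions A, B of (θ,r₀) ∈ [0,π]×(r₊,∞) such that for every compact interval [r₁,r₂] ⊂ (r₊,∞) there is a constant C > 0 with |r_*(r(t;θ,r₀)) + t + A(θ,r₀)·e^{−2κ₊t} − B(θ,r₀)| ≤ C·e^{−4κ₊t} for all t ≥ 0, θ ∈ [0,π] and r₀ ∈ [r₁,r₂]. -/

import Mathlib

set_option synthInstance.maxHeartbeats 400000
set_option maxHeartbeats 1000000
set_option linter.unusedSectionVars false


/-!
STATEMENT 5 (Regge–Wheeler asymptotics along the collapse).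

Let `r(t;θ,r₀)` be the solution of the radial collapse ODE.  There exist
smooth functions `A, B` of `(θ,r₀) ∈ [0,π]×(r₊,∞)` such that for every compact
interval `[r₁,r₂] ⊂ (r₊,∞)` there is a constant `C > 0` with
`|r_*(r(t;θ,r₀)) + t + A(θ,r₀)e^{−2κ₊t} − B(θ,r₀)| ≤ C·e^{−4κ₊t}`
for all `t ≥ 0`, `θ ∈ [0,π]` and `r₀ ∈ [r₁,r₂]`.
-/

noncomputable section
open Real Set

namespace Stmt5

open MeasureTheory intervalIntegral
open scoped ContDiff

theorem norm_inl_le : ‖ContinuousLinearMap.inl ℝ (ℝ × ℝ) ℝ‖ ≤ 1 := by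
  refine ContinuousLinearMap.opNorm_le_bound _ zero_le_one (fun x => ?_)
  simp [Prod.norm_def]

theorem hasFDerivAt_parametric {F : Type} [NormedAddCommGroup F] [NormedSpace ℝ F]
    [CompleteSpace F]
    (q : (ℝ × ℝ) → ℝ → F) (hq : ContDiff ℝ 1 ↿q) (p : ℝ × ℝ) :
    HasFDerivAt (fun p => ∫ s in (0:ℝ)..1, q p s)
      (∫ s in (0:ℝ)..1, ((fderiv ℝ ↿q (p, s)).comp (ContinuousLinearMap.inl ℝ (ℝ×ℝ) ℝ))) p := by
  have hqc : Continuous ↿q := hq.continuous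
  have hfd : Continuous (fderiv ℝ ↿q) := hq.continuous_fderiv one_ne_zero
  -- bound on the compact set
  obtain ⟨C, hC⟩ : ∃ C, ∀ z ∈ (Metric.closedBall p 1) ×ˢ (Icc (0:ℝ) 1),
      ‖fderiv ℝ ↿q z‖ ≤ C := by
    have : IsCompact ((Metric.closedBall p 1) ×ˢ (Icc (0:ℝ) 1)) :=
      (isCompact_closedBall p 1).prod isCompact_Icc
    obtain ⟨C, hC⟩ := this.exists_bound_of_continuousOn (hfd.norm.continuousOn)
    exact ⟨C, fun z hz => by simpa using hC z hz⟩
  have key := hasFDerivAt_integral_of_dominated_of_fderiv_le (𝕜 := ℝ)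
    (F := fun x t => q x t)
    (F' := fun x t => (fderiv ℝ ↿q (x, t)).comp (ContinuousLinearMap.inl ℝ (ℝ×ℝ) ℝ))
    (μ := volume) (x₀ := p) (a := 0) (b := 1) (bound := fun _ => C) (s := Metric.ball p 1) (Metric.ball_mem_nhds p one_pos)
    ?_ ?_ ?_ ?_ ?_ ?_
  · exact key
  · filter_upwards with x
    exact ((hqc.comp (Continuous.prodMk_right x)).aestronglyMeasurable).restrict
  · exact ((hqc.comp (Continuous.prodMk_right p))).intervalIntegrable 0 1
  · apply Continuous.aestronglyMeasurable
    exact ((hfd.comp (Continuous.prodMk_right p)).clm_comp continuous_const)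
  · filter_upwards with t ht x hx
    calc ‖(fderiv ℝ ↿q (x, t)).comp (ContinuousLinearMap.inl ℝ (ℝ×ℝ) ℝ)‖
        ≤ ‖fderiv ℝ ↿q (x, t)‖ * ‖ContinuousLinearMap.inl ℝ (ℝ×ℝ) ℝ‖ :=
          ContinuousLinearMap.opNorm_comp_le _ _
      _ ≤ C * 1 := by
          refine mul_le_mul ?_ norm_inl_le (norm_nonneg _) ?_
          · refine hC (x, t) ⟨Metric.ball_subset_closedBall hx, ?_⟩
            rw [uIoc_of_le (zero_le_one)] at ht
            exact ⟨ht.1.le, ht.2⟩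
          · exact (norm_nonneg _).trans (hC (p, 0) (by simp [Metric.mem_closedBall]))
      _ = C := mul_one C
  · exact intervalIntegrable_const
  · filter_upwards with t ht x hx
    have h1 : HasFDerivAt ↿q (fderiv ℝ ↿q (x, t)) (x, t) :=
      (hq.differentiable one_ne_zero (x, t)).hasFDerivAt
    have h2 : HasFDerivAt (fun y : ℝ × ℝ => (y, t))
        (ContinuousLinearMap.inl ℝ (ℝ×ℝ) ℝ) x :=
      HasFDerivAt.prodMk (hasFDerivAt_id x) (hasFDerivAt_const t x)
    exact h1.comp x h2


theorem contDiff_parametric_aux (n : ℕ) :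
    ∀ (F : Type) [NormedAddCommGroup F] [NormedSpace ℝ F] [CompleteSpace F]
      (q : (ℝ × ℝ) → ℝ → F), ContDiff ℝ (⊤:ℕ∞) ↿q →
      ContDiff ℝ n (fun p => ∫ s in (0:ℝ)..1, q p s) := by
  induction n with
  | zero =>
    intro F _ _ _ q hq
    rw [show ((0:ℕ) : WithTop ℕ∞) = 0 from rfl, contDiff_zero]
    have : Differentiable ℝ (fun p => ∫ s in (0:ℝ)..1, q p s) := fun p =>
      (hasFDerivAt_parametric q (hq.of_le (by exact_mod_cast le_top)) p).differentiableAt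
    exact this.continuous
  | succ n ih =>
    intro F _ _ _ q hq
    rw [show ((n+1:ℕ) : WithTop ℕ∞) = (n : WithTop ℕ∞) + 1 by push_cast; ring,
      contDiff_succ_iff_fderiv]
    have hq1 : ContDiff ℝ 1 ↿q := hq.of_le (by exact_mod_cast le_top)
    refine ⟨fun p => (hasFDerivAt_parametric q hq1 p).differentiableAt, ?_, ?_⟩
    · intro h; exact absurd h (by exact_mod_cast (by simp : (n : WithTop ℕ∞) ≠ ⊤))
    · have heq : fderiv ℝ (fun p => ∫ s in (0:ℝ)..1, q p s)
          = fun p => ∫ s in (0:ℝ)..1,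
              ((fderiv ℝ ↿q (p, s)).comp (ContinuousLinearMap.inl ℝ (ℝ×ℝ) ℝ)) := by
        funext p
        exact (hasFDerivAt_parametric q hq1 p).fderiv
      rw [heq]
      refine ih ((ℝ × ℝ) →L[ℝ] F)
        (fun p s => (fderiv ℝ ↿q (p, s)).comp (ContinuousLinearMap.inl ℝ (ℝ×ℝ) ℝ)) ?_
      have h1 : ContDiff ℝ (⊤:ℕ∞) (fderiv ℝ ↿q) :=
        hq.fderiv_right (by exact_mod_cast le_top)
      exact h1.clm_comp contDiff_const

theorem contDiff_parametric {F : Type} [NormedAddCommGroup F] [NormedSpace ℝ F]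
    [CompleteSpace F]
    {q : (ℝ × ℝ) → ℝ → F} (hq : ContDiff ℝ (⊤:ℕ∞) ↿q) :
    ContDiff ℝ (⊤:ℕ∞) (fun p => ∫ s in (0:ℝ)..1, q p s) := by
  have : ((⊤:ℕ∞) : WithTop ℕ∞) = (∞ : WithTop ℕ∞) := rfl
  rw [this, contDiff_infty]
  intro n
  exact contDiff_parametric_aux n F q hq




/-- `Δ(r) = r² − 2Mr + a² + Q²`. -/
def Δ (M a Q r : ℝ) : ℝ := r ^ 2 - 2 * M * r + a ^ 2 + Q ^ 2

/-- Outer horizon `r₊`. -/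
def rplus (M a Q : ℝ) : ℝ := M + Real.sqrt (M ^ 2 - (a ^ 2 + Q ^ 2))

/-- Inner horizon `r₋`. -/
def rminus (M a Q : ℝ) : ℝ := M - Real.sqrt (M ^ 2 - (a ^ 2 + Q ^ 2))

/-- Surface gravity of the outer horizon. -/
def κplus (M a Q : ℝ) : ℝ :=
  (rplus M a Q - rminus M a Q) / (2 * ((rplus M a Q) ^ 2 + a ^ 2))

/-- Surface gravity of the inner horizon. -/
def κminus (M a Q : ℝ) : ℝ :=
  (rplus M a Q - rminus M a Q) / (2 * ((rminus M a Q) ^ 2 + a ^ 2))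

/-- `σ²(r,θ) = (r²+a²)² − a²Δ(r)sin²θ`. -/
def sigma2 (M a Q r θ : ℝ) : ℝ :=
  (r ^ 2 + a ^ 2) ^ 2 - a ^ 2 * Δ M a Q r * Real.sin θ ^ 2

/-- The Regge–Wheeler coordinate
`r_*(r) = r + (1/(2κ₊))ln(r−r₊) − (1/(2κ₋))ln(r−r₋) + R₀`. -/
def rstar (M a Q R0 r : ℝ) : ℝ :=
  r + (1 / (2 * κplus M a Q)) * Real.log (r - rplus M a Q)
    - (1 / (2 * κminus M a Q)) * Real.log (r - rminus M a Q) + R0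

/-- Right-hand side of the radial collapse ODE. -/
def V (M a Q θ r : ℝ) : ℝ :=
  -Real.sqrt ((r ^ 2 + a ^ 2) * (2 * M * r - Q ^ 2)) * Δ M a Q r
    / sigma2 M a Q r θ

/-! Auxiliary definitions -/

def rc (M a Q : ℝ) : ℝ := (rplus M a Q + rminus M a Q) / 2
def mm (M a Q r : ℝ) : ℝ :=
  rplus M a Q + (r - rplus M a Q) *
    Real.smoothTransition ((r - rc M a Q) / (rplus M a Q - rc M a Q))
def G2 (M a Q θ r : ℝ) : ℝ :=
  Real.sqrt ((r ^ 2 + a ^ 2) * (2 * M * r - Q ^ 2)) / sigma2 M a Q r θ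
def f0 (M a Q : ℝ) (p : ℝ × ℝ) : ℝ :=
  1 / ((mm M a Q p.2 - rminus M a Q) * G2 M a Q p.1 (mm M a Q p.2))
def df (M a Q : ℝ) (p : ℝ × ℝ) : ℝ := fderiv ℝ (f0 M a Q) p (0, 1)
def Hh (M a Q θ ρ : ℝ) : ℝ :=
  ∫ s in (0:ℝ)..1, df M a Q (θ, rplus M a Q + s * (ρ - rplus M a Q))
def dH (M a Q : ℝ) (p : ℝ × ℝ) : ℝ :=
  fderiv ℝ (fun p : ℝ × ℝ => Hh M a Q p.1 p.2) p (0, 1)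
def Psi (M a Q θ ρ : ℝ) : ℝ := ∫ u in rplus M a Q..ρ, Hh M a Q θ u

section Basic
variable {M a Q : ℝ} (hM : 0 < M) (ha : 0 < a) (hsub : a ^ 2 + Q ^ 2 < M ^ 2)

include hM ha hsub

lemma sqrt_pos' : 0 < Real.sqrt (M ^ 2 - (a ^ 2 + Q ^ 2)) :=
  Real.sqrt_pos.2 (by linarith)

lemma rm_lt_rp : rminus M a Q < rplus M a Q := by
  have := sqrt_pos' hM ha hsub; unfold rplus rminus; linarith

lemma rm_pos : 0 < rminus M a Q := by
  have h1 : Real.sqrt (M ^ 2 - (a ^ 2 + Q ^ 2)) < M := by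
    have : M ^ 2 - (a ^ 2 + Q ^ 2) < M ^ 2 := by nlinarith
    calc Real.sqrt (M ^ 2 - (a ^ 2 + Q ^ 2)) < Real.sqrt (M ^ 2) :=
          Real.sqrt_lt_sqrt (by nlinarith) this
      _ = M := by rw [Real.sqrt_sq hM.le]
  unfold rminus; linarith

lemma rc_lt_rp : rc M a Q < rplus M a Q := by
  have := rm_lt_rp hM ha hsub; unfold rc; linarith

lemma rm_lt_rc : rminus M a Q < rc M a Q := by
  have := rm_lt_rp hM ha hsub; unfold rc; linarith

lemma rc_pos : 0 < rc M a Q := by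
  have := rm_pos hM ha hsub; have := rm_lt_rc hM ha hsub; linarith

lemma rp_add_rm : rplus M a Q + rminus M a Q = 2 * M := by
  unfold rplus rminus; ring

lemma rp_mul_rm : rplus M a Q * rminus M a Q = a ^ 2 + Q ^ 2 := by
  have h : Real.sqrt (M ^ 2 - (a ^ 2 + Q ^ 2)) ^ 2 = M ^ 2 - (a ^ 2 + Q ^ 2) :=
    Real.sq_sqrt (by linarith)
  unfold rplus rminus; nlinarith [h]

lemma Δ_factor (r : ℝ) : Δ M a Q r = (r - rplus M a Q) * (r - rminus M a Q) := by
  have h1 := rp_add_rm hM ha hsub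
  have h2 := rp_mul_rm hM ha hsub
  unfold Δ; linear_combination r * h1 - h2

lemma kp_pos : 0 < κplus M a Q := by
  have h1 := rm_lt_rp hM ha hsub
  have h2 : 0 < rplus M a Q ^ 2 + a ^ 2 := by positivity
  exact div_pos (by linarith) (by linarith)

lemma km_pos : 0 < κminus M a Q := by
  have h1 := rm_lt_rp hM ha hsub
  have h2 : 0 < rminus M a Q ^ 2 + a ^ 2 := by positivity
  exact div_pos (by linarith) (by linarith)

lemma kp_inv : 1 / (2 * κplus M a Q) = (rplus M a Q ^ 2 + a ^ 2) / (rplus M a Q - rminus M a Q) := by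
  have h1 := rm_lt_rp hM ha hsub
  have h2 : (0:ℝ) < rplus M a Q ^ 2 + a ^ 2 := by positivity
  unfold κplus
  have h3 : 2 * ((rplus M a Q - rminus M a Q) / (2 * (rplus M a Q ^ 2 + a ^ 2)))
      = (rplus M a Q - rminus M a Q) / (rplus M a Q ^ 2 + a ^ 2) := by
    field_simp
  rw [h3, one_div_div]

lemma km_inv : 1 / (2 * κminus M a Q) = (rminus M a Q ^ 2 + a ^ 2) / (rplus M a Q - rminus M a Q) := by
  have h1 := rm_lt_rp hM ha hsub
  have h2 : (0:ℝ) < rminus M a Q ^ 2 + a ^ 2 := by positivity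
  unfold κminus
  have h3 : 2 * ((rplus M a Q - rminus M a Q) / (2 * (rminus M a Q ^ 2 + a ^ 2)))
      = (rplus M a Q - rminus M a Q) / (rminus M a Q ^ 2 + a ^ 2) := by
    field_simp
  rw [h3, one_div_div]

lemma pos1 {r : ℝ} (hr : rc M a Q ≤ r) : 0 < 2 * M * r - Q ^ 2 := by
  have hfac := Δ_factor hM ha hsub r
  have hrc := rc_lt_rp hM ha hsub
  have hrm := rm_lt_rc hM ha hsub
  have hrp0 : 0 < rplus M a Q := lt_trans (rc_pos hM ha hsub) hrc
  rcases le_total r (rplus M a Q) with h | h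
  · -- Δ(r) ≤ 0, 2Mr − Q² = r² + a² − Δ(r)
    have hΔ : Δ M a Q r ≤ 0 := by
      rw [hfac]; apply mul_nonpos_of_nonpos_of_nonneg <;> nlinarith
    have : 2 * M * r - Q ^ 2 = r ^ 2 + a ^ 2 - Δ M a Q r := by unfold Δ; ring
    rw [this]; nlinarith
  · have hΔp : Δ M a Q (rplus M a Q) = 0 := by
      rw [Δ_factor hM ha hsub]; ring
    have : 2 * M * rplus M a Q - Q ^ 2 = rplus M a Q ^ 2 + a ^ 2 - Δ M a Q (rplus M a Q) := by
      unfold Δ; ring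
    nlinarith [hΔp]

lemma pos2 {r : ℝ} (θ : ℝ) (hr : rc M a Q ≤ r) : 0 < sigma2 M a Q r θ := by
  have hfac := Δ_factor hM ha hsub r
  have hrc := rc_lt_rp hM ha hsub
  have hrm := rm_lt_rc hM ha hsub
  have hr0 : 0 < r := lt_of_lt_of_le (rc_pos hM ha hsub) hr
  have hs1 : Real.sin θ ^ 2 ≤ 1 := Real.sin_sq_le_one θ
  have hs0 : 0 ≤ Real.sin θ ^ 2 := sq_nonneg _
  unfold sigma2
  rcases le_total r (rplus M a Q) with h | h
  · have hΔ : Δ M a Q r ≤ 0 := by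
      rw [hfac]; apply mul_nonpos_of_nonpos_of_nonneg <;> nlinarith
    have hp : (0:ℝ) < (r ^ 2 + a ^ 2) ^ 2 := by positivity
    nlinarith [mul_nonneg (mul_nonneg (sq_nonneg a) (neg_nonneg.2 hΔ)) hs0]
  · have hΔ0 : 0 ≤ Δ M a Q r := by rw [hfac]; apply mul_nonneg <;> nlinarith
    have h2M : 0 < 2 * M * r - Q ^ 2 := pos1 hM ha hsub hr
    have hΔle : Δ M a Q r ≤ r ^ 2 + a ^ 2 := by unfold Δ; nlinarith
    have hp : (0:ℝ) < (r ^ 2 + a ^ 2) * r ^ 2 := by positivity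
    nlinarith [mul_le_mul_of_nonneg_left hs1 (mul_nonneg (sq_nonneg a) hΔ0),
      mul_le_mul_of_nonneg_left hΔle (sq_nonneg a)]

end Basic

section Smooth
variable {M a Q : ℝ} (hM : 0 < M) (ha : 0 < a) (hsub : a ^ 2 + Q ^ 2 < M ^ 2)

include hM ha hsub in
lemma mm_eq {r : ℝ} (h : rplus M a Q ≤ r) : mm M a Q r = r := by
  have h1 : rc M a Q < rplus M a Q := rc_lt_rp hM ha hsub
  unfold mm
  rw [Real.smoothTransition.one_of_one_le, mul_one]
  · ring
  · rw [le_div_iff₀ (by linarith)]; linarith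

include hM ha hsub in
lemma mm_ge (r : ℝ) : rc M a Q ≤ mm M a Q r := by
  have h1 : rc M a Q < rplus M a Q := rc_lt_rp hM ha hsub
  rcases le_total r (rplus M a Q) with h | h
  · rcases le_total r (rc M a Q) with h2 | h2
    · unfold mm
      rw [Real.smoothTransition.zero_of_nonpos, mul_zero]
      · linarith
      · apply div_nonpos_of_nonpos_of_nonneg <;> linarith
    · have hu0 := Real.smoothTransition.nonneg ((r - rc M a Q) / (rplus M a Q - rc M a Q))
      have hu1 := Real.smoothTransition.le_one ((r - rc M a Q) / (rplus M a Q - rc M a Q))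
      unfold mm
      nlinarith [mul_le_mul_of_nonpos_left hu1 (by linarith : r - rplus M a Q ≤ 0)]
  · rw [mm_eq hM ha hsub h]; linarith

lemma mm_contDiff : ContDiff ℝ ∞ (mm M a Q) := by
  unfold mm
  exact contDiff_const.add ((contDiff_id.sub contDiff_const).mul
    (Real.smoothTransition.contDiff.comp
      ((contDiff_id.sub contDiff_const).div_const _)))

include hM ha hsub

lemma G2_pos (θ : ℝ) {r : ℝ} (hr : rc M a Q ≤ r) : 0 < G2 M a Q θ r := by
  have h0 : 0 < r := lt_of_lt_of_le (rc_pos hM ha hsub) hr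
  exact div_pos (Real.sqrt_pos.2 (mul_pos (by positivity) (pos1 hM ha hsub hr)))
    (pos2 hM ha hsub θ hr)

lemma denom_pos (p : ℝ × ℝ) :
    0 < (mm M a Q p.2 - rminus M a Q) * G2 M a Q p.1 (mm M a Q p.2) := by
  have h1 := mm_ge hM ha hsub p.2
  have h2 := rm_lt_rc hM ha hsub
  exact mul_pos (by linarith) (G2_pos hM ha hsub p.1 h1)

lemma f0_contDiff : ContDiff ℝ ∞ (f0 M a Q) := by
  have hmm : ContDiff ℝ ∞ (fun p : ℝ × ℝ => mm M a Q p.2) :=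
    (mm_contDiff (M := M) (a := a) (Q := Q)).comp contDiff_snd
  have hmgec : ∀ p : ℝ × ℝ, rc M a Q ≤ mm M a Q p.2 := fun p => mm_ge hM ha hsub p.2
  have hmpos : ∀ p : ℝ × ℝ, 0 < mm M a Q p.2 :=
    fun p => lt_of_lt_of_le (rc_pos hM ha hsub) (hmgec p)
  have harg : ContDiff ℝ ∞ (fun p : ℝ × ℝ =>
      (mm M a Q p.2 ^ 2 + a ^ 2) * (2 * M * mm M a Q p.2 - Q ^ 2)) := by
    exact ((hmm.pow 2).add contDiff_const).mul
      ((contDiff_const.mul hmm).sub contDiff_const)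
  have hsqrt : ContDiff ℝ ∞ (fun p : ℝ × ℝ =>
      Real.sqrt ((mm M a Q p.2 ^ 2 + a ^ 2) * (2 * M * mm M a Q p.2 - Q ^ 2))) := by
    refine harg.sqrt (fun p => ?_)
    have := pos1 hM ha hsub (hmgec p)
    have := hmpos p
    positivity
  have hsig : ContDiff ℝ ∞ (fun p : ℝ × ℝ => sigma2 M a Q (mm M a Q p.2) p.1) := by
    simp only [sigma2, Δ]
    exact (((hmm.pow 2).add contDiff_const).pow 2).sub
      ((contDiff_const.mul ((((hmm.pow 2).sub (contDiff_const.mul hmm)).add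
        contDiff_const).add contDiff_const)).mul
          ((Real.contDiff_sin.comp contDiff_fst).pow 2))
  have hsigne : ∀ p : ℝ × ℝ, sigma2 M a Q (mm M a Q p.2) p.1 ≠ 0 :=
    fun p => ne_of_gt (pos2 hM ha hsub p.1 (hmgec p))
  have hG2 : ContDiff ℝ ∞ (fun p : ℝ × ℝ => G2 M a Q p.1 (mm M a Q p.2)) := by
    unfold G2
    exact hsqrt.div hsig hsigne
  have hden : ContDiff ℝ ∞ (fun p : ℝ × ℝ =>
      (mm M a Q p.2 - rminus M a Q) * G2 M a Q p.1 (mm M a Q p.2)) :=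
    (hmm.sub contDiff_const).mul hG2
  exact contDiff_const.div hden (fun p => ne_of_gt (denom_pos hM ha hsub p))

lemma df_contDiff : ContDiff ℝ ∞ (df M a Q) := by
  unfold df
  exact ((f0_contDiff hM ha hsub).fderiv_right (by exact_mod_cast le_top)).clm_apply
    contDiff_const

lemma f0_hasDeriv (θ r : ℝ) :
    HasDerivAt (fun x => f0 M a Q (θ, x)) (df M a Q (θ, r)) r := by
  have h1 : HasFDerivAt (f0 M a Q) (fderiv ℝ (f0 M a Q) (θ, r)) (θ, r) :=
    ((f0_contDiff hM ha hsub).differentiable (by simp) (θ, r)).hasFDerivAt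
  have h2 : HasDerivAt (fun x : ℝ => ((θ, x) : ℝ × ℝ)) (0, 1) r :=
    HasDerivAt.prodMk (hasDerivAt_const r θ) (hasDerivAt_id r)
  exact h1.comp_hasDerivAt r h2

end Smooth

section HPsi
variable {M a Q : ℝ} (hM : 0 < M) (ha : 0 < a) (hsub : a ^ 2 + Q ^ 2 < M ^ 2)
include hM ha hsub

lemma Hh_contDiff : ContDiff ℝ ∞ (fun p : ℝ × ℝ => Hh M a Q p.1 p.2) := by
  have hq : ContDiff ℝ ∞
      ↿(fun (p : ℝ × ℝ) (s : ℝ) => df M a Q (p.1, rplus M a Q + s * (p.2 - rplus M a Q))) := by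
    exact (df_contDiff hM ha hsub).comp (ContDiff.prodMk (contDiff_fst.comp contDiff_fst)
      (contDiff_const.add (contDiff_snd.mul
        ((contDiff_snd.comp contDiff_fst).sub contDiff_const))))
  exact contDiff_parametric hq

lemma Hh_cont (θ : ℝ) : Continuous (Hh M a Q θ) :=
  (Hh_contDiff hM ha hsub).continuous.comp (continuous_const.prodMk continuous_id)

lemma Hh_mul (θ ρ : ℝ) :
    Hh M a Q θ ρ * (ρ - rplus M a Q) = f0 M a Q (θ, ρ) - f0 M a Q (θ, rplus M a Q) := by
  by_cases hc : ρ = rplus M a Q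
  · simp [hc]
  · have hcc : ρ - rplus M a Q ≠ 0 := sub_ne_zero.2 hc
    have hfc : Continuous (fun u => df M a Q (θ, u)) :=
      (df_contDiff hM ha hsub).continuous.comp (continuous_const.prodMk continuous_id)
    have hftc : ∫ u in rplus M a Q..ρ, df M a Q (θ, u)
        = f0 M a Q (θ, ρ) - f0 M a Q (θ, rplus M a Q) :=
      intervalIntegral.integral_eq_sub_of_hasDerivAt
        (fun u _ => f0_hasDeriv hM ha hsub θ u) (hfc.intervalIntegrable _ _)
    have harg : ∀ s : ℝ, rplus M a Q + s * (ρ - rplus M a Q)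
        = (ρ - rplus M a Q) * s + rplus M a Q := fun s => by ring
    have hsubst := intervalIntegral.integral_comp_mul_add
      (a := (0:ℝ)) (b := 1) (fun u => df M a Q (θ, u)) hcc (rplus M a Q)
    unfold Hh
    simp only [harg]
    rw [hsubst]
    norm_num
    rw [hftc]
    field_simp

lemma Psi_uncurry_eq : (fun p : ℝ × ℝ => Psi M a Q p.1 p.2)
    = fun p : ℝ × ℝ => (p.2 - rplus M a Q) •
        ∫ s in (0:ℝ)..1, Hh M a Q p.1 (rplus M a Q + s * (p.2 - rplus M a Q)) := by
  funext p
  by_cases hc : p.2 = rplus M a Q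
  · simp [Psi, hc]
  · have hcc : p.2 - rplus M a Q ≠ 0 := sub_ne_zero.2 hc
    have harg : ∀ s : ℝ, rplus M a Q + s * (p.2 - rplus M a Q)
        = (p.2 - rplus M a Q) * s + rplus M a Q := fun s => by ring
    have hsubst := intervalIntegral.integral_comp_mul_add
      (a := (0:ℝ)) (b := 1) (fun u => Hh M a Q p.1 u) hcc (rplus M a Q)
    simp only [harg]
    rw [hsubst]
    norm_num
    rw [← mul_assoc, mul_inv_cancel₀ hcc, one_mul]
    rfl

lemma Psi_contDiff : ContDiff ℝ ∞ (fun p : ℝ × ℝ => Psi M a Q p.1 p.2) := by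
  rw [Psi_uncurry_eq hM ha hsub]
  refine (contDiff_snd.sub contDiff_const).smul ?_
  have hq : ContDiff ℝ ∞
      ↿(fun (p : ℝ × ℝ) (s : ℝ) => Hh M a Q p.1 (rplus M a Q + s * (p.2 - rplus M a Q))) := by
    exact (Hh_contDiff hM ha hsub).comp (ContDiff.prodMk (contDiff_fst.comp contDiff_fst)
      (contDiff_const.add (contDiff_snd.mul
        ((contDiff_snd.comp contDiff_fst).sub contDiff_const))))
  exact contDiff_parametric hq

lemma Psi_hasDeriv (θ ρ : ℝ) : HasDerivAt (Psi M a Q θ) (Hh M a Q θ ρ) ρ :=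
  intervalIntegral.integral_hasDerivAt_right
    ((Hh_cont hM ha hsub θ).intervalIntegrable _ _)
    ((Hh_cont hM ha hsub θ).stronglyMeasurableAtFilter _ _)
    (Hh_cont hM ha hsub θ).continuousAt

lemma horizon_eq : 2 * M * rplus M a Q - Q ^ 2 = rplus M a Q ^ 2 + a ^ 2 := by
  have h := Δ_factor hM ha hsub (rplus M a Q)
  have h0 : Δ M a Q (rplus M a Q) = 0 := by rw [h]; ring
  unfold Δ at h0; linarith

lemma sigma2_at_rp (θ : ℝ) : sigma2 M a Q (rplus M a Q) θ = (rplus M a Q ^ 2 + a ^ 2) ^ 2 := by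
  have h := Δ_factor hM ha hsub (rplus M a Q)
  have h0 : Δ M a Q (rplus M a Q) = 0 := by rw [h]; ring
  unfold sigma2; rw [h0]; ring

lemma f0_at_rp (θ : ℝ) : f0 M a Q (θ, rplus M a Q)
    = (rplus M a Q ^ 2 + a ^ 2) / (rplus M a Q - rminus M a Q) := by
  have hx : (0:ℝ) < rplus M a Q ^ 2 + a ^ 2 := by positivity
  have hd : rminus M a Q < rplus M a Q := rm_lt_rp hM ha hsub
  unfold f0 G2
  rw [mm_eq hM ha hsub le_rfl, horizon_eq hM ha hsub, sigma2_at_rp hM ha hsub,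
    Real.sqrt_mul_self hx.le]
  have hne : rplus M a Q - rminus M a Q ≠ 0 := ne_of_gt (by linarith)
  have hxne : rplus M a Q ^ 2 + a ^ 2 ≠ 0 := ne_of_gt hx
  rw [div_eq_div_iff (by positivity) hne]
  field_simp

lemma G2_at_pos (θ : ℝ) {ρ : ℝ} (hρ : rplus M a Q < ρ) : 0 < G2 M a Q θ ρ :=
  G2_pos hM ha hsub θ (le_of_lt (lt_trans (rc_lt_rp hM ha hsub) hρ))

lemma DG2_pos (θ : ℝ) {ρ : ℝ} (hρ : rplus M a Q < ρ) : 0 < Δ M a Q ρ * G2 M a Q θ ρ := by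
  have h1 : 0 < Δ M a Q ρ := by
    rw [Δ_factor hM ha hsub]
    have := rm_lt_rp hM ha hsub
    apply mul_pos <;> linarith
  exact mul_pos h1 (G2_at_pos hM ha hsub θ hρ)

lemma V_eq_DG2 (θ ρ : ℝ) : V M a Q θ ρ = -(Δ M a Q ρ * G2 M a Q θ ρ) := by
  unfold V G2; ring

lemma P_hasDerivAt (θ : ℝ) {ρ : ℝ} (hρ : rplus M a Q < ρ) :
    HasDerivAt (fun x => 1 / (2 * κplus M a Q)
        * Real.log (x - rplus M a Q) + Psi M a Q θ x)
      (1 / (Δ M a Q ρ * G2 M a Q θ ρ)) ρ := by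
  rw [kp_inv hM ha hsub]
  have hw : (0:ℝ) < ρ - rplus M a Q := sub_pos.2 hρ
  have h1 : HasDerivAt (fun x : ℝ => x - rplus M a Q) 1 ρ := (hasDerivAt_id ρ).sub_const _
  have hlog : HasDerivAt (fun x => Real.log (x - rplus M a Q)) (1 / (ρ - rplus M a Q)) ρ := by
    simpa using h1.log (ne_of_gt hw)
  have hP := ((hlog.const_mul ((rplus M a Q ^ 2 + a ^ 2) / (rplus M a Q - rminus M a Q))).add
    (Psi_hasDeriv hM ha hsub θ ρ))
  refine hP.congr_deriv ?_
  symm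
  -- algebra
  have hd : rminus M a Q < rplus M a Q := rm_lt_rp hM ha hsub
  have hrc : rc M a Q < rplus M a Q := rc_lt_rp hM ha hsub
  have hG2 : 0 < G2 M a Q θ ρ := G2_at_pos hM ha hsub θ hρ
  have hρm : 0 < ρ - rminus M a Q := by linarith
  have hHh : Hh M a Q θ ρ = (f0 M a Q (θ, ρ) - f0 M a Q (θ, rplus M a Q)) / (ρ - rplus M a Q) :=
    (eq_div_iff (ne_of_gt hw)).2 (Hh_mul hM ha hsub θ ρ)
  have hf0ρ : f0 M a Q (θ, ρ) = 1 / ((ρ - rminus M a Q) * G2 M a Q θ ρ) := by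
    unfold f0; rw [mm_eq hM ha hsub hρ.le]
  have hG2ne : G2 M a Q θ ρ ≠ 0 := ne_of_gt hG2
  have hwne : ρ - rplus M a Q ≠ 0 := ne_of_gt hw
  have hmne : ρ - rminus M a Q ≠ 0 := ne_of_gt hρm
  have hdne : rplus M a Q - rminus M a Q ≠ 0 := ne_of_gt (by linarith)
  rw [hHh, hf0ρ, f0_at_rp hM ha hsub, Δ_factor hM ha hsub]
  field_simp
  ring

lemma Hh_hasDeriv (θ u : ℝ) :
    HasDerivAt (Hh M a Q θ) (dH M a Q (θ, u)) u := by
  have h1 : HasFDerivAt (fun p : ℝ × ℝ => Hh M a Q p.1 p.2)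
      (fderiv ℝ (fun p : ℝ × ℝ => Hh M a Q p.1 p.2) (θ, u)) (θ, u) :=
    (((Hh_contDiff hM ha hsub)).differentiable (by simp) (θ, u)).hasFDerivAt
  have h2 : HasDerivAt (fun x : ℝ => ((θ, x) : ℝ × ℝ)) (0, 1) u :=
    HasDerivAt.prodMk (hasDerivAt_const u θ) (hasDerivAt_id u)
  exact h1.comp_hasDerivAt u h2

lemma V_neg (θ : ℝ) {ρ : ℝ} (hρ : rplus M a Q < ρ) : V M a Q θ ρ < 0 := by
  rw [V_eq_DG2 hM ha hsub]
  exact neg_neg_iff_pos.2 (DG2_pos hM ha hsub θ hρ)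

end HPsi

/-! Elementary inequalities -/

lemma abs_log_one_add_sub {x : ℝ} (hx : 0 ≤ x) : |Real.log (1 + x) - x| ≤ x ^ 2 := by
  have hx1 : (0:ℝ) < 1 + x := by linarith
  have h1 : Real.log (1 + x) ≤ x := by
    have := Real.log_le_sub_one_of_pos hx1; linarith
  have h3 := Real.one_sub_inv_le_log_of_pos hx1
  have hinv : (1 + x)⁻¹ * (1 + x) = 1 := inv_mul_cancel₀ (ne_of_gt hx1)
  have hinvpos : 0 < (1 + x)⁻¹ := inv_pos.2 hx1
  have h4 : x - x ^ 2 ≤ 1 - (1 + x)⁻¹ := by nlinarith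
  rw [abs_le]
  constructor <;> nlinarith

lemma abs_exp_sub_one (x : ℝ) : |Real.exp x - 1| ≤ |x| * Real.exp |x| := by
  rcases le_or_gt 0 x with h | h
  · have h1 := Real.add_one_le_exp x
    have h2 := Real.add_one_le_exp (-x)
    have hinv : Real.exp (-x) * Real.exp x = 1 := by
      rw [← Real.exp_add]; simp
    have h3 : (1 - x) * Real.exp x ≤ 1 := by
      have h4 : 1 - x ≤ Real.exp (-x) := by linarith
      calc (1 - x) * Real.exp x ≤ Real.exp (-x) * Real.exp x :=
            mul_le_mul_of_nonneg_right h4 (Real.exp_pos x).le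
        _ = 1 := hinv
    rw [abs_of_nonneg (by linarith : (0:ℝ) ≤ Real.exp x - 1), abs_of_nonneg h]
    nlinarith
  · have h1 := Real.add_one_le_exp x
    have h2 : Real.exp x < 1 := by
      rw [← Real.exp_zero]; exact Real.exp_lt_exp.2 h
    have h5 : 1 ≤ Real.exp (-x) := by
      rw [← Real.exp_zero]; exact Real.exp_le_exp.2 (by linarith)
    rw [abs_of_neg (by linarith : Real.exp x - 1 < 0), abs_of_neg h]
    have h6 : -x * 1 ≤ -x * Real.exp (-x) :=
      mul_le_mul_of_nonneg_left h5 (by linarith)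
    nlinarith


theorem regge_wheeler_asymptotics (M a Q R0 : ℝ) (hM : 0 < M) (ha : 0 < a)
    (hsub : a ^ 2 + Q ^ 2 < M ^ 2)
    (rr : ℝ → ℝ → ℝ → ℝ)
    (hsol : ∀ θ ∈ Set.Icc (0 : ℝ) Real.pi, ∀ r0 : ℝ, rplus M a Q < r0 →
      rr 0 θ r0 = r0 ∧
      (∀ t : ℝ, 0 ≤ t → rplus M a Q < rr t θ r0 ∧
        HasDerivAt (fun t' => rr t' θ r0) (V M a Q θ (rr t θ r0)) t)) :
    ∃ A B : ℝ → ℝ → ℝ,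
      ContDiffOn ℝ (⊤ : ℕ∞) (fun p : ℝ × ℝ => A p.1 p.2)
        (Set.Icc 0 Real.pi ×ˢ Set.Ioi (rplus M a Q)) ∧
      ContDiffOn ℝ (⊤ : ℕ∞) (fun p : ℝ × ℝ => B p.1 p.2)
        (Set.Icc 0 Real.pi ×ˢ Set.Ioi (rplus M a Q)) ∧
      ∀ r1 r2 : ℝ, rplus M a Q < r1 → r1 ≤ r2 →
        ∃ C : ℝ, 0 < C ∧
          ∀ t : ℝ, 0 ≤ t → ∀ θ ∈ Set.Icc (0 : ℝ) Real.pi, ∀ r0 ∈ Set.Icc r1 r2,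
            |rstar M a Q R0 (rr t θ r0) + t
                + A θ r0 * Real.exp (-2 * κplus M a Q * t) - B θ r0|
              ≤ C * Real.exp (-4 * κplus M a Q * t) := by
  have hrm := rm_lt_rp hM ha hsub
  have hκp := kp_pos hM ha hsub
  have hκm := km_pos hM ha hsub
  have hrcp := rc_lt_rp hM ha hsub
  have hcm_pos : 0 < 1 / (2 * κminus M a Q) := by positivity
  refine ⟨fun θ r0 => -((1 - 1 / (2 * κminus M a Q) / (rplus M a Q - rminus M a Q)
        - Hh M a Q θ (rplus M a Q)) *
      ((r0 - rplus M a Q) * Real.exp (2 * κplus M a Q * Psi M a Q θ r0))),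
    fun θ r0 => 1 / (2 * κplus M a Q) * Real.log (r0 - rplus M a Q) + Psi M a Q θ r0
      + (rplus M a Q - 1 / (2 * κminus M a Q) * Real.log (rplus M a Q - rminus M a Q) + R0),
    ?_, ?_, ?_⟩
  · -- smoothness of A
    apply ContDiff.contDiffOn
    have hHrp : ContDiff ℝ ∞ (fun p : ℝ × ℝ => Hh M a Q p.1 (rplus M a Q)) :=
      (Hh_contDiff hM ha hsub).comp (contDiff_fst.prodMk contDiff_const)
    exact (((contDiff_const.sub hHrp).mul ((contDiff_snd.sub contDiff_const).mul
      (Real.contDiff_exp.comp (contDiff_const.mul (Psi_contDiff hM ha hsub))))).neg)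
  · -- smoothness of B
    intro p hp
    have hp2 : rplus M a Q < p.2 := hp.2
    apply ContDiffAt.contDiffWithinAt
    have hlog : ContDiffAt ℝ ∞ (fun p : ℝ × ℝ => Real.log (p.2 - rplus M a Q)) p :=
      (Real.contDiffAt_log.2 (ne_of_gt (sub_pos.2 hp2))).comp p
        (contDiffAt_snd.sub contDiffAt_const)
    exact ((contDiffAt_const.mul hlog).add (Psi_contDiff hM ha hsub).contDiffAt).add
      contDiffAt_const
  · -- the quantitative bound
    intro r1 r2 hr1 hr12
    have hr2 : rplus M a Q < r2 := lt_of_lt_of_le hr1 hr12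
    -- compactness bounds
    have hKcomp : IsCompact ((Icc (0:ℝ) Real.pi) ×ˢ (Icc (rplus M a Q) r2)) :=
      isCompact_Icc.prod isCompact_Icc
    obtain ⟨S0, hS0⟩ := hKcomp.exists_bound_of_continuousOn
      ((Psi_contDiff hM ha hsub).continuous.continuousOn)
    obtain ⟨L10, hL10⟩ := hKcomp.exists_bound_of_continuousOn
      ((Hh_contDiff hM ha hsub).continuous.continuousOn)
    have hdHcont : Continuous (dH M a Q) := by
      unfold dH
      exact (((Hh_contDiff hM ha hsub).fderiv_right (m := ∞)
        (by simp)).clm_apply contDiff_const).continuous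
    obtain ⟨L20, hL20⟩ := hKcomp.exists_bound_of_continuousOn hdHcont.continuousOn
    set S := max S0 0 with hSdef
    set L1 := max L10 0 with hL1def
    set L2 := max L20 0 with hL2def
    have hS : ∀ p ∈ (Icc (0:ℝ) Real.pi) ×ˢ (Icc (rplus M a Q) r2), |Psi M a Q p.1 p.2| ≤ S :=
      fun p hp => le_trans (by simpa using hS0 p hp) (le_max_left _ _)
    have hL1 : ∀ p ∈ (Icc (0:ℝ) Real.pi) ×ˢ (Icc (rplus M a Q) r2), |Hh M a Q p.1 p.2| ≤ L1 :=
      fun p hp => le_trans (by simpa using hL10 p hp) (le_max_left _ _)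
    have hL2 : ∀ p ∈ (Icc (0:ℝ) Real.pi) ×ˢ (Icc (rplus M a Q) r2), |dH M a Q p| ≤ L2 :=
      fun p hp => le_trans (by simpa using hL20 p hp) (le_max_left _ _)
    have hSnn : 0 ≤ S := le_max_right _ _
    have hL1nn : 0 ≤ L1 := le_max_right _ _
    have hL2nn : 0 ≤ L2 := le_max_right _ _
    set κ := κplus M a Q with hκdef
    set rp := rplus M a Q with hrpdef
    set rm := rminus M a Q with hrmdef
    set cm := 1 / (2 * κminus M a Q) with hcmdef
    set Kw := (r2 - rp) * Real.exp (2 * κ * (2 * S)) with hKwdef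
    set αb := (r2 - rp) * Real.exp (2 * κ * S) with hαbdef
    set c1b := 1 + cm / (rp - rm) + L1 with hc1bdef
    have hKwpos : 0 < Kw := by
      have : 0 < r2 - rp := sub_pos.2 hr2
      positivity
    have hαbpos : 0 < αb := by
      have : 0 < r2 - rp := sub_pos.2 hr2
      positivity
    have hc1bpos : 0 < c1b := by
      have h1 : 0 < cm / (rp - rm) := div_pos hcm_pos (sub_pos.2 hrm)
      rw [hc1bdef]; linarith only [h1, hL1nn]
    refine ⟨(cm / (rp - rm) ^ 2 + L2) * Kw ^ 2
      + c1b * (αb * (2 * κ * L1 * Kw) * Real.exp (2 * κ * S)) + 1, by positivity, ?_⟩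
    intro t ht θ hθ r0 hr0
    have hr0p : rp < r0 := lt_of_lt_of_le hr1 hr0.1
    have hr02 : r0 ≤ r2 := le_trans hr0.2 (le_refl r2)
    obtain ⟨h0, hdyn⟩ := hsol θ hθ r0 hr0p
    have hrtp : rp < rr t θ r0 := (hdyn t ht).1
    -- monotonicity
    have hmono : rr t θ r0 ≤ r0 := by
      rcases eq_or_lt_of_le ht with h | h
      · simp [← h, h0]
      · have hanti : StrictAntiOn (fun s => rr s θ r0) (Icc 0 t) := by
          apply strictAntiOn_of_deriv_neg (convex_Icc 0 t)
          · intro x hx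
            exact ((hdyn x hx.1).2.continuousAt).continuousWithinAt
          · intro x hx
            rw [interior_Icc] at hx
            rw [((hdyn x hx.1.le).2).deriv]
            exact V_neg hM ha hsub θ ((hdyn x hx.1.le).1)
        have h2 := hanti (left_mem_Icc.2 ht) (right_mem_Icc.2 ht) h
        simp only [h0] at h2
        exact h2.le
    have hrtK : rr t θ r0 ∈ Icc rp r2 := ⟨hrtp.le, le_trans hmono hr02⟩
    have hw : 0 < rr t θ r0 - rp := sub_pos.2 hrtp
    have hw0 : 0 < r0 - rp := sub_pos.2 hr0p
    have hw0le : r0 - rp ≤ r2 - rp := sub_le_sub_right hr02 rp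
    have hrtm : 0 < rr t θ r0 - rm := by linarith only [hrtp, hrm]
    -- the conserved quantity
    have hgkey : 1 / (2 * κ) * Real.log (rr t θ r0 - rp) + Psi M a Q θ (rr t θ r0) + t
        = 1 / (2 * κ) * Real.log (r0 - rp) + Psi M a Q θ r0 := by
      have hgd : ∀ s ∈ Icc 0 t, HasDerivAt
          (fun s' => 1 / (2 * κ) * Real.log (rr s' θ r0 - rp)
            + Psi M a Q θ (rr s' θ r0) + s') 0 s := by
        intro s hs
        have hrs := (hdyn s hs.1).2
        have hrsp := (hdyn s hs.1).1
        have hP := P_hasDerivAt hM ha hsub θ hrsp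
        have hPQ : HasDerivAt (fun s' => 1 / (2 * κ) * Real.log (rr s' θ r0 - rp)
            + Psi M a Q θ (rr s' θ r0))
            (1 / (Δ M a Q (rr s θ r0) * G2 M a Q θ (rr s θ r0)) * V M a Q θ (rr s θ r0)) s :=
          by have := HasDerivAt.comp s hP hrs; exact this
        have htot := hPQ.add (hasDerivAt_id s)
        refine htot.congr_deriv ?_
        symm
        have hDG2 := DG2_pos hM ha hsub θ hrsp
        rw [V_eq_DG2 hM ha hsub]
        field_simp
        rw [div_self (ne_of_gt hDG2)]; ring
      have hcont : ContinuousOn (fun s' => 1 / (2 * κ) * Real.log (rr s' θ r0 - rp)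
          + Psi M a Q θ (rr s' θ r0) + s') (Icc 0 t) :=
        fun s hs => ((hgd s hs).continuousAt).continuousWithinAt
      have hconst := constant_of_has_deriv_right_zero hcont
        (fun s hs => ((hgd s (Ico_subset_Icc_self hs)).hasDerivWithinAt))
      have h2 := hconst t (right_mem_Icc.2 ht)
      simpa [h0] using h2
    -- exact formula for w
    have hκ0 : κ ≠ 0 := ne_of_gt hκp
    have hloge : Real.log (rr t θ r0 - rp) = Real.log (r0 - rp)
        + (2 * κ * (Psi M a Q θ r0 - Psi M a Q θ (rr t θ r0)) - 2 * κ * t) := by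
      field_simp at hgkey
      linarith only [hgkey]
    have hwe : rr t θ r0 - rp = (r0 - rp)
        * Real.exp (2 * κ * (Psi M a Q θ r0 - Psi M a Q θ (rr t θ r0)) - 2 * κ * t) := by
      rw [← Real.exp_log hw, hloge, Real.exp_add, Real.exp_log hw0]
    -- basic bounds
    have hPsirt_S : |Psi M a Q θ (rr t θ r0)| ≤ S := hS (θ, rr t θ r0) (Set.mk_mem_prod hθ hrtK)
    have hPsir0_S : |Psi M a Q θ r0| ≤ S := hS (θ, r0) (Set.mk_mem_prod hθ ⟨hr0p.le, hr02⟩)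
    have hHrp_L1 : |Hh M a Q θ rp| ≤ L1 :=
      hL1 (θ, rp) (Set.mk_mem_prod hθ ⟨le_refl rp, hr2.le⟩)
    have he2 : (0:ℝ) < Real.exp (-2 * κ * t) := Real.exp_pos _
    have hwK : rr t θ r0 - rp ≤ Kw * Real.exp (-2 * κ * t) := by
      rw [hwe, hKwdef]
      have hexp : 2 * κ * (Psi M a Q θ r0 - Psi M a Q θ (rr t θ r0)) - 2 * κ * t
          = (2 * κ * (Psi M a Q θ r0 - Psi M a Q θ (rr t θ r0))) + (-2 * κ * t) := by ring
      rw [hexp, Real.exp_add]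
      have h1 : Real.exp (2 * κ * (Psi M a Q θ r0 - Psi M a Q θ (rr t θ r0)))
          ≤ Real.exp (2 * κ * (2 * S)) := by
        apply Real.exp_le_exp.2
        have h9 : Psi M a Q θ r0 - Psi M a Q θ (rr t θ r0) ≤ 2 * S := by
          have h2 := abs_le.1 hPsirt_S
          have h3 := abs_le.1 hPsir0_S
          linarith only [h2.1, h2.2, h3.1, h3.2]
        exact mul_le_mul_of_nonneg_left h9 (by positivity)
      calc (r0 - rp) * (Real.exp (2 * κ * (Psi M a Q θ r0 - Psi M a Q θ (rr t θ r0)))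
            * Real.exp (-2 * κ * t))
          ≤ (r2 - rp) * (Real.exp (2 * κ * (2 * S)) * Real.exp (-2 * κ * t)) := by
            apply mul_le_mul hw0le _ (by positivity) (by linarith only [hr2])
            exact mul_le_mul_of_nonneg_right h1 he2.le
        _ = (r2 - rp) * Real.exp (2 * κ * (2 * S)) * Real.exp (-2 * κ * t) := by ring
    -- Lipschitz bound for Hh near rp
    have hHha : ∀ u ∈ Icc rp r2, |Hh M a Q θ u - Hh M a Q θ rp| ≤ L2 * (u - rp) := by
      intro u hu
      have hmvt := Convex.norm_image_sub_le_of_norm_hasDerivWithin_le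
        (f := Hh M a Q θ) (f' := fun u => dH M a Q (θ, u)) (s := Icc rp r2) (C := L2)
        (fun x _ => (Hh_hasDeriv hM ha hsub θ x).hasDerivWithinAt)
        (fun x hx => by simpa using hL2 (θ, x) (Set.mk_mem_prod hθ hx))
        (convex_Icc _ _) (left_mem_Icc.2 hr2.le) hu
      rw [Real.norm_eq_abs, Real.norm_eq_abs, abs_of_nonneg (sub_nonneg.2 hu.1)] at hmvt
      exact hmvt
    -- |Psi| ≤ L1 * w
    have hPsiLip : ∀ ρ ∈ Icc rp r2, |Psi M a Q θ ρ| ≤ L1 * (ρ - rp) := by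
      intro ρ hρ
      have h1 : ‖∫ u in rp..ρ, Hh M a Q θ u‖ ≤ L1 * |ρ - rp| := by
        apply intervalIntegral.norm_integral_le_of_norm_le_const
        intro u hu
        rw [uIoc_of_le hρ.1] at hu
        rw [Real.norm_eq_abs]
        exact hL1 (θ, u) (Set.mk_mem_prod hθ ⟨hu.1.le, le_trans hu.2 hρ.2⟩)
      rw [Real.norm_eq_abs, abs_of_nonneg (sub_nonneg.2 hρ.1)] at h1
      exact h1
    -- second order bound T_b
    have hTb : |Psi M a Q θ (rr t θ r0) - Hh M a Q θ rp * (rr t θ r0 - rp)|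
        ≤ L2 * (rr t θ r0 - rp) * (rr t θ r0 - rp) := by
      have heq : Psi M a Q θ (rr t θ r0) - Hh M a Q θ rp * (rr t θ r0 - rp)
          = ∫ u in rp..rr t θ r0, (Hh M a Q θ u - Hh M a Q θ rp) := by
        rw [intervalIntegral.integral_sub
          ((Hh_cont hM ha hsub θ).intervalIntegrable _ _) intervalIntegrable_const,
          intervalIntegral.integral_const, smul_eq_mul]
        show Psi M a Q θ (rr t θ r0) - Hh M a Q θ rp * (rr t θ r0 - rp)
          = Psi M a Q θ (rr t θ r0) - (rr t θ r0 - rp) * Hh M a Q θ rp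
        ring
      rw [heq]
      have h1 : ‖∫ u in rp..rr t θ r0, (Hh M a Q θ u - Hh M a Q θ rp)‖
          ≤ (L2 * (rr t θ r0 - rp)) * |rr t θ r0 - rp| := by
        apply intervalIntegral.norm_integral_le_of_norm_le_const
        intro u hu
        rw [uIoc_of_le hrtp.le] at hu
        rw [Real.norm_eq_abs]
        have h2 := hHha u ⟨hu.1.le, le_trans hu.2 hrtK.2⟩
        have h3 : L2 * (u - rp) ≤ L2 * (rr t θ r0 - rp) :=
          mul_le_mul_of_nonneg_left (sub_le_sub_right hu.2 rp) hL2nn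
        linarith only [h2, h3]
      rw [Real.norm_eq_abs, abs_of_nonneg (sub_nonneg.2 hrtp.le)] at h1
      linarith only [h1]
    -- first order log bound T_a
    have hTa : |cm * (Real.log (rr t θ r0 - rm) - Real.log (rp - rm))
        - cm / (rp - rm) * (rr t θ r0 - rp)|
        ≤ cm / (rp - rm) ^ 2 * (rr t θ r0 - rp) ^ 2 := by
      have hdpos : 0 < rp - rm := sub_pos.2 hrm
      have hlog1 : Real.log (rr t θ r0 - rm) - Real.log (rp - rm)
          = Real.log (1 + (rr t θ r0 - rp) / (rp - rm)) := by
        rw [← Real.log_div (ne_of_gt hrtm) (ne_of_gt hdpos)]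
        congr 1
        field_simp
        ring
      rw [hlog1]
      have hxnn : 0 ≤ (rr t θ r0 - rp) / (rp - rm) := by positivity
      have h1 := abs_log_one_add_sub hxnn
      have heq2 : cm * Real.log (1 + (rr t θ r0 - rp) / (rp - rm))
          - cm / (rp - rm) * (rr t θ r0 - rp)
          = cm * (Real.log (1 + (rr t θ r0 - rp) / (rp - rm))
              - (rr t θ r0 - rp) / (rp - rm)) := by ring
      rw [heq2, abs_mul, abs_of_pos hcm_pos]
      calc cm * |Real.log (1 + (rr t θ r0 - rp) / (rp - rm))
            - (rr t θ r0 - rp) / (rp - rm)|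
          ≤ cm * ((rr t θ r0 - rp) / (rp - rm)) ^ 2 :=
            mul_le_mul_of_nonneg_left h1 hcm_pos.le
        _ = cm / (rp - rm) ^ 2 * (rr t θ r0 - rp) ^ 2 := by
            field_simp
    -- the α-term
    have hα : (0:ℝ) < (r0 - rp) * Real.exp (2 * κ * Psi M a Q θ r0) := by positivity
    have hααb : (r0 - rp) * Real.exp (2 * κ * Psi M a Q θ r0) ≤ αb := by
      rw [hαbdef]
      apply mul_le_mul hw0le _ (Real.exp_pos _).le (by linarith only [hr2])
      apply Real.exp_le_exp.2
      exact mul_le_mul_of_nonneg_left (abs_le.1 hPsir0_S).2 (by positivity)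
    have hwα : rr t θ r0 - rp
        - (r0 - rp) * Real.exp (2 * κ * Psi M a Q θ r0) * Real.exp (-2 * κ * t)
        = (r0 - rp) * Real.exp (2 * κ * Psi M a Q θ r0) * Real.exp (-2 * κ * t)
          * (Real.exp (-2 * κ * Psi M a Q θ (rr t θ r0)) - 1) := by
      rw [hwe]
      have e1 : 2 * κ * (Psi M a Q θ r0 - Psi M a Q θ (rr t θ r0)) - 2 * κ * t
          = 2 * κ * Psi M a Q θ r0 + (-2 * κ * t) + (-2 * κ * Psi M a Q θ (rr t θ r0)) := by
        ring
      rw [e1, Real.exp_add, Real.exp_add]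
      ring
    have hexp1 : |Real.exp (-2 * κ * Psi M a Q θ (rr t θ r0)) - 1|
        ≤ (2 * κ * (L1 * (rr t θ r0 - rp))) * Real.exp (2 * κ * S) := by
      have h1 := abs_exp_sub_one (-2 * κ * Psi M a Q θ (rr t θ r0))
      have h2 : |(-2) * κ * Psi M a Q θ (rr t θ r0)| = 2 * κ * |Psi M a Q θ (rr t θ r0)| := by
        rw [abs_mul, abs_mul]
        simp [abs_of_pos hκp]
      have h3 : |Psi M a Q θ (rr t θ r0)| ≤ L1 * (rr t θ r0 - rp) :=
        hPsiLip (rr t θ r0) hrtK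
      have h4 : |(-2) * κ * Psi M a Q θ (rr t θ r0)| ≤ 2 * κ * (L1 * (rr t θ r0 - rp)) := by
        rw [h2]; exact mul_le_mul_of_nonneg_left h3 (by positivity)
      have h5 : Real.exp |(-2) * κ * Psi M a Q θ (rr t θ r0)| ≤ Real.exp (2 * κ * S) := by
        apply Real.exp_le_exp.2
        rw [h2]; exact mul_le_mul_of_nonneg_left hPsirt_S (by positivity)
      calc |Real.exp (-2 * κ * Psi M a Q θ (rr t θ r0)) - 1|
          ≤ |(-2) * κ * Psi M a Q θ (rr t θ r0)|
            * Real.exp |(-2) * κ * Psi M a Q θ (rr t θ r0)| := h1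
        _ ≤ (2 * κ * (L1 * (rr t θ r0 - rp))) * Real.exp (2 * κ * S) :=
            mul_le_mul h4 h5 (Real.exp_pos _).le (by positivity)
    -- main identity
    have hc1 : ∀ x : ℝ, True := fun _ => trivial
    have hkey2 : rstar M a Q R0 (rr t θ r0) + t
        + -((1 - cm / (rp - rm) - Hh M a Q θ rp)
            * ((r0 - rp) * Real.exp (2 * κ * Psi M a Q θ r0))) * Real.exp (-2 * κ * t)
        - (1 / (2 * κ) * Real.log (r0 - rp) + Psi M a Q θ r0
            + (rp - cm * Real.log (rp - rm) + R0))
        = ((rr t θ r0 - rp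
              - cm * (Real.log (rr t θ r0 - rm) - Real.log (rp - rm))
              - Psi M a Q θ (rr t θ r0))
            - (1 - cm / (rp - rm) - Hh M a Q θ rp) * (rr t θ r0 - rp))
          + (1 - cm / (rp - rm) - Hh M a Q θ rp)
            * (rr t θ r0 - rp
              - (r0 - rp) * Real.exp (2 * κ * Psi M a Q θ r0) * Real.exp (-2 * κ * t)) := by
      simp only [rstar]
      linear_combination hgkey
    -- final estimate
    have he4 : Real.exp (-2 * κ * t) * Real.exp (-2 * κ * t) = Real.exp (-4 * κ * t) := by
      rw [← Real.exp_add]; congr 1; ring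
    have hXa : |(rr t θ r0 - rp
          - cm * (Real.log (rr t θ r0 - rm) - Real.log (rp - rm))
          - Psi M a Q θ (rr t θ r0))
        - (1 - cm / (rp - rm) - Hh M a Q θ rp) * (rr t θ r0 - rp)|
        ≤ (cm / (rp - rm) ^ 2 + L2) * ((rr t θ r0 - rp) * (rr t θ r0 - rp)) := by
      have heq3 : (rr t θ r0 - rp
            - cm * (Real.log (rr t θ r0 - rm) - Real.log (rp - rm))
            - Psi M a Q θ (rr t θ r0))
          - (1 - cm / (rp - rm) - Hh M a Q θ rp) * (rr t θ r0 - rp)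
          = -(cm * (Real.log (rr t θ r0 - rm) - Real.log (rp - rm))
              - cm / (rp - rm) * (rr t θ r0 - rp))
            - (Psi M a Q θ (rr t θ r0) - Hh M a Q θ rp * (rr t θ r0 - rp)) := by ring
      rw [heq3]
      calc |(-(cm * (Real.log (rr t θ r0 - rm) - Real.log (rp - rm))
              - cm / (rp - rm) * (rr t θ r0 - rp)))
            - (Psi M a Q θ (rr t θ r0) - Hh M a Q θ rp * (rr t θ r0 - rp))|
          ≤ |cm * (Real.log (rr t θ r0 - rm) - Real.log (rp - rm))
              - cm / (rp - rm) * (rr t θ r0 - rp)|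
            + |Psi M a Q θ (rr t θ r0) - Hh M a Q θ rp * (rr t θ r0 - rp)| := by
            refine (abs_sub _ _).trans (le_of_eq ?_)
            rw [abs_neg]
        _ ≤ cm / (rp - rm) ^ 2 * (rr t θ r0 - rp) ^ 2
            + L2 * (rr t θ r0 - rp) * (rr t θ r0 - rp) := add_le_add hTa hTb
        _ = (cm / (rp - rm) ^ 2 + L2) * ((rr t θ r0 - rp) * (rr t θ r0 - rp)) := by ring
    have hc1abs : |1 - cm / (rp - rm) - Hh M a Q θ rp| ≤ c1b := by
      rw [hc1bdef]
      have h1 : 0 < cm / (rp - rm) := div_pos hcm_pos (sub_pos.2 hrm)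
      calc |1 - cm / (rp - rm) - Hh M a Q θ rp|
          ≤ |1 - cm / (rp - rm)| + |Hh M a Q θ rp| := abs_sub _ _
        _ ≤ (1 + cm / (rp - rm)) + L1 := by
            apply add_le_add _ hHrp_L1
            calc |1 - cm / (rp - rm)| ≤ |1| + |cm / (rp - rm)| := abs_sub _ _
              _ = 1 + cm / (rp - rm) := by
                  rw [abs_one, abs_of_pos h1]
    have hwwKK : (rr t θ r0 - rp) * (rr t θ r0 - rp)
        ≤ Kw ^ 2 * Real.exp (-4 * κ * t) := by
      calc (rr t θ r0 - rp) * (rr t θ r0 - rp)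
          ≤ (Kw * Real.exp (-2 * κ * t)) * (Kw * Real.exp (-2 * κ * t)) :=
            mul_le_mul hwK hwK hw.le (by positivity)
        _ = Kw ^ 2 * (Real.exp (-2 * κ * t) * Real.exp (-2 * κ * t)) := by ring
        _ = Kw ^ 2 * Real.exp (-4 * κ * t) := by rw [he4]
    have hsecond : |(1 - cm / (rp - rm) - Hh M a Q θ rp)
          * (rr t θ r0 - rp
            - (r0 - rp) * Real.exp (2 * κ * Psi M a Q θ r0) * Real.exp (-2 * κ * t))|
        ≤ c1b * (αb * (2 * κ * L1 * Kw) * Real.exp (2 * κ * S)) * Real.exp (-4 * κ * t) := by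
      rw [abs_mul]
      have h6 : |rr t θ r0 - rp
          - (r0 - rp) * Real.exp (2 * κ * Psi M a Q θ r0) * Real.exp (-2 * κ * t)|
          ≤ αb * (2 * κ * L1 * Kw) * Real.exp (2 * κ * S) * Real.exp (-4 * κ * t) := by
        rw [hwα, abs_mul]
        have h7 : |(r0 - rp) * Real.exp (2 * κ * Psi M a Q θ r0) * Real.exp (-2 * κ * t)|
            = (r0 - rp) * Real.exp (2 * κ * Psi M a Q θ r0) * Real.exp (-2 * κ * t) := by
          rw [abs_of_pos (by positivity)]
        rw [h7]
        calc (r0 - rp) * Real.exp (2 * κ * Psi M a Q θ r0) * Real.exp (-2 * κ * t)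
              * |Real.exp (-2 * κ * Psi M a Q θ (rr t θ r0)) - 1|
            ≤ (αb * Real.exp (-2 * κ * t))
              * ((2 * κ * (L1 * (Kw * Real.exp (-2 * κ * t)))) * Real.exp (2 * κ * S)) := by
              apply mul_le_mul
              · exact mul_le_mul_of_nonneg_right hααb he2.le
              · refine le_trans hexp1 ?_
                apply mul_le_mul_of_nonneg_right _ (Real.exp_pos _).le
                have h10 : L1 * (rr t θ r0 - rp) ≤ L1 * (Kw * Real.exp (-2 * κ * t)) :=
                  mul_le_mul_of_nonneg_left hwK hL1nn
                exact mul_le_mul_of_nonneg_left h10 (by positivity)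
              · exact abs_nonneg _
              · positivity
          _ = αb * (2 * κ * L1 * Kw) * Real.exp (2 * κ * S)
              * (Real.exp (-2 * κ * t) * Real.exp (-2 * κ * t)) := by ring
          _ = αb * (2 * κ * L1 * Kw) * Real.exp (2 * κ * S) * Real.exp (-4 * κ * t) := by
              rw [he4]
      calc |1 - cm / (rp - rm) - Hh M a Q θ rp| * |rr t θ r0 - rp
            - (r0 - rp) * Real.exp (2 * κ * Psi M a Q θ r0) * Real.exp (-2 * κ * t)|
          ≤ c1b * (αb * (2 * κ * L1 * Kw) * Real.exp (2 * κ * S) * Real.exp (-4 * κ * t)) :=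
            mul_le_mul hc1abs h6 (abs_nonneg _) hc1bpos.le
        _ = c1b * (αb * (2 * κ * L1 * Kw) * Real.exp (2 * κ * S)) * Real.exp (-4 * κ * t) := by
            ring
    rw [hkey2]
    have he4pos : (0:ℝ) < Real.exp (-4 * κ * t) := Real.exp_pos _
    calc |((rr t θ r0 - rp - cm * (Real.log (rr t θ r0 - rm) - Real.log (rp - rm))
            - Psi M a Q θ (rr t θ r0))
          - (1 - cm / (rp - rm) - Hh M a Q θ rp) * (rr t θ r0 - rp))
        + (1 - cm / (rp - rm) - Hh M a Q θ rp)
          * (rr t θ r0 - rp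
            - (r0 - rp) * Real.exp (2 * κ * Psi M a Q θ r0) * Real.exp (-2 * κ * t))|
        ≤ |(rr t θ r0 - rp - cm * (Real.log (rr t θ r0 - rm) - Real.log (rp - rm))
            - Psi M a Q θ (rr t θ r0))
          - (1 - cm / (rp - rm) - Hh M a Q θ rp) * (rr t θ r0 - rp)|
          + |(1 - cm / (rp - rm) - Hh M a Q θ rp)
          * (rr t θ r0 - rp
            - (r0 - rp) * Real.exp (2 * κ * Psi M a Q θ r0) * Real.exp (-2 * κ * t))| :=
          abs_add_le _ _
      _ ≤ (cm / (rp - rm) ^ 2 + L2) * (Kw ^ 2 * Real.exp (-4 * κ * t))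
          + c1b * (αb * (2 * κ * L1 * Kw) * Real.exp (2 * κ * S)) * Real.exp (-4 * κ * t) := by
          apply add_le_add _ hsecond
          refine le_trans hXa ?_
          apply mul_le_mul_of_nonneg_left hwwKK
          positivity
      _ = ((cm / (rp - rm) ^ 2 + L2) * Kw ^ 2
          + c1b * (αb * (2 * κ * L1 * Kw) * Real.exp (2 * κ * S)))
            * Real.exp (-4 * κ * t) := by ring
      _ ≤ ((cm / (rp - rm) ^ 2 + L2) * Kw ^ 2
          + c1b * (αb * (2 * κ * L1 * Kw) * Real.exp (2 * κ * S)) + 1)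
            * Real.exp (-4 * κ * t) := by
            apply mul_le_mul_of_nonneg_right _ he4pos.le
            exact le_add_of_nonneg_right zero_le_one



end Stmt5
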